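/- Let X₁,…,X_d be Polish spaces, and for each i let μ_i ∈ P(X_i), let Δ_i ⊆ P(X_i) be a Borel set, and let ν_i be a Borel probability measure on P(X_i) with ν_i(Δ_i) = 1 such that μ_i is the barycenter of ν_i (i.e. ∫ φ dμ_i = ∫ (∫ φ ds) dν_i(s) for every bounded continuous φ : X_i → ℝ). Then the product measure μ = μ₁ ⊗ ⋯ ⊗ μ_d is the barycenter of the product measure ν = ν₁ ⊗ ⋯ ⊗ ν_d in the product space: ν(Δ₁ × ⋯ × Δ_d) = 1 and for every bounded continuous φ : X₁ × ⋯ × X_d → ℝ, ∫ φ dμ = ∫_{P(X₁) × ⋯ × P(X_d)} (∫ φ d(s₁ ⊗ ⋯ ⊗ s_d)) dν(s₁,…,s_d). -/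

import Mathlib

open MeasureTheory Filter
open scoped ENNReal NNReal Topology BoundedContinuousFunction

section Aux

variable {Ω : Type*} [MeasurableSpace Ω] [TopologicalSpace Ω] [HasOuterApproxClosed Ω]
  [BorelSpace Ω] [MeasurableSpace (ProbabilityMeasure Ω)] [BorelSpace (ProbabilityMeasure Ω)]

lemma aux_measurable_lintegral_bcnn (f : Ω →ᵇ ℝ≥0) :
    Measurable fun s : ProbabilityMeasure Ω => ∫⁻ x, (f x : ℝ≥0∞) ∂(s : Measure Ω) := by
  have h : ∀ s : ProbabilityMeasure Ω,
      ∫⁻ x, (f x : ℝ≥0∞) ∂(s : Measure Ω)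
        = ((s.toFiniteMeasure.testAgainstNN f : ℝ≥0) : ℝ≥0∞) := fun s => by
    exact (FiniteMeasure.testAgainstNN_coe_eq (μ := s.toFiniteMeasure) (f := f)).symm
  simp_rw [h]
  exact (ENNReal.continuous_coe.comp
    (ProbabilityMeasure.continuous_testAgainstNN_eval f)).measurable

lemma aux_measurable_eval : ∀ ⦃A : Set Ω⦄, MeasurableSet A →
    Measurable fun s : ProbabilityMeasure Ω => (s : Measure Ω) A := by
  refine MeasurableSpace.induction_on_inter
      (C := fun A _ => Measurable fun s : ProbabilityMeasure Ω => (s : Measure Ω) A)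
      (BorelSpace.measurable_eq.trans borel_eq_generateFrom_isClosed) isPiSystem_isClosed
      ?_ ?_ ?_ ?_
  · simp
  · intro F hF
    replace hF : IsClosed F := hF
    apply ENNReal.measurable_of_tendsto
      (f := fun n (s : ProbabilityMeasure Ω) => ∫⁻ x, (hF.apprSeq n x : ℝ≥0∞) ∂(s : Measure Ω))
      (fun n => aux_measurable_lintegral_bcnn (hF.apprSeq n))
    rw [tendsto_pi_nhds]
    intro s
    exact HasOuterApproxClosed.tendsto_lintegral_apprSeq hF (s : Measure Ω)
  · intro A hA h
    have key : ∀ s : ProbabilityMeasure Ω, (s : Measure Ω) Aᶜ = 1 - (s : Measure Ω) A := by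
      intro s
      rw [measure_compl hA (measure_ne_top _ _), measure_univ]
    simp_rw [key]
    exact (ENNReal.continuous_sub_left ENNReal.one_ne_top).measurable.comp h
  · intro g hdisj hmeas h
    have key : ∀ s : ProbabilityMeasure Ω,
        (s : Measure Ω) (⋃ n, g n) = ∑' n, (s : Measure Ω) (g n) :=
      fun s => measure_iUnion hdisj hmeas
    simp_rw [key]
    exact Measurable.ennreal_tsum h

lemma aux_measurable_toMeasure :
    Measurable fun s : ProbabilityMeasure Ω => (s : Measure Ω) :=
  Measure.measurable_measure.mpr fun _ hA => aux_measurable_eval hA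

lemma aux_bary_bind (μ0 : ProbabilityMeasure Ω) (ν' : Measure (ProbabilityMeasure Ω))
    [IsProbabilityMeasure ν']
    (hbary : ∀ g : Ω → ℝ, Continuous g → (∃ C : ℝ, ∀ x, |g x| ≤ C) →
      ∫ x, g x ∂(μ0 : Measure Ω) = ∫ s, (∫ x, g x ∂(s : Measure Ω)) ∂ν') :
    (μ0 : Measure Ω) = ν'.bind (fun s => (s : Measure Ω)) := by
  apply ext_of_forall_lintegral_eq_of_IsFiniteMeasure
  intro f
  set g : Ω → ℝ := fun x => (f x : ℝ) with hgdef
  have hgc : Continuous g := NNReal.continuous_coe.comp f.continuous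
  set Cf : ℝ := ((nndist f 0 : ℝ≥0) : ℝ) with hCf
  have hgb : ∀ x, |g x| ≤ Cf := by
    intro x
    rw [abs_of_nonneg (f x).coe_nonneg]
    exact_mod_cast BoundedContinuousFunction.NNReal.upper_bound f x
  have hl : ∀ (κ : Measure Ω), IsFiniteMeasure κ →
      ∫⁻ x, (f x : ℝ≥0∞) ∂κ = ENNReal.ofReal (∫ x, g x ∂κ) := by
    intro κ hκ
    have hint : Integrable g κ := by
      exact BoundedContinuousFunction.integrable_of_nnreal κ f
    exact lintegral_coe_eq_integral f hint
  have hfin : ∀ s : ProbabilityMeasure Ω, IsFiniteMeasure (s : Measure Ω) := by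
    intro s
    haveI := s.prop
    infer_instance
  rw [Measure.lintegral_bind aux_measurable_toMeasure.aemeasurable f.measurable_coe_ennreal_comp.aemeasurable]
  rw [hl (μ0 : Measure Ω) inferInstance, hbary g hgc ⟨Cf, hgb⟩]
  have hmeas : Measurable fun s : ProbabilityMeasure Ω => ∫ x, g x ∂(s : Measure Ω) := by
    have key : ∀ s : ProbabilityMeasure Ω, ∫ x, g x ∂(s : Measure Ω)
        = (∫⁻ x, (f x : ℝ≥0∞) ∂(s : Measure Ω)).toReal := by
      intro s
      rw [hl (s : Measure Ω) (hfin s),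
        ENNReal.toReal_ofReal (integral_nonneg fun x => (f x).coe_nonneg)]
    simp_rw [key]
    exact (aux_measurable_lintegral_bcnn f).ennreal_toReal
  have hiν : Integrable (fun s : ProbabilityMeasure Ω => ∫ x, g x ∂(s : Measure Ω)) ν' := by
    refine Integrable.mono' (integrable_const Cf) hmeas.aestronglyMeasurable
      (Eventually.of_forall fun s => ?_)
    haveI := s.prop
    have hb := norm_integral_le_of_norm_le_const
      (C := Cf) (μ := (s : Measure Ω)) (f := g)
      (Eventually.of_forall fun x => by rw [Real.norm_eq_abs]; exact hgb x)
    simpa using hb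
  rw [ofReal_integral_eq_lintegral_ofReal hiν
    (Eventually.of_forall fun s => integral_nonneg fun x => (f x).coe_nonneg)]
  exact (lintegral_congr fun s : ProbabilityMeasure Ω => (hl (s : Measure Ω) (hfin s))).symm

lemma aux_nonempty_of_prob {α : Type*} [MeasurableSpace α] (m : Measure α)
    [IsProbabilityMeasure m] : Nonempty α := by
  by_contra h
  rw [not_nonempty_iff] at h
  have h1 : (Set.univ : Set α) = ∅ := Set.univ_eq_empty_iff.mpr h
  have h2 := measure_univ (μ := m)
  rw [h1, measure_empty] at h2
  exact zero_ne_one h2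

end Aux

lemma aux_lintegral_pi_prod {n : ℕ} {E : Fin n → Type*} [∀ i, MeasurableSpace (E i)]
    (μ : ∀ i, Measure (E i)) [∀ i, SigmaFinite (μ i)] {f : ∀ i, E i → ℝ≥0∞}
    (hf : ∀ i, Measurable (f i)) :
    ∫⁻ x, ∏ i, f i (x i) ∂Measure.pi μ = ∏ i, ∫⁻ x, f i x ∂μ i := by
  induction n with
  | zero => simp [lintegral_const]
  | succ n ih =>
    rw [← ((MeasureTheory.measurePreserving_piFinSuccAbove μ 0).symm).lintegral_comp_emb
      (MeasurableEquiv.measurableEmbedding _)]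
    simp_rw [MeasurableEquiv.piFinSuccAbove_symm_apply, Fin.insertNthEquiv,
      Fin.prod_univ_succ, Fin.insertNth_zero]
    simp only [Fin.zero_succAbove, cast_eq, Function.comp_def, Equiv.coe_fn_mk,
      Fin.cons_zero, Fin.cons_succ]
    have h1 := lintegral_prod_mul (μ := μ 0) (ν := Measure.pi fun j : Fin n => μ j.succ) (f := f 0) (g := fun y : ∀ j : Fin n, E j.succ => ∏ x : Fin n, f x.succ (y x))
      (hf 0).aemeasurable
      ((Finset.measurable_prod Finset.univ fun i _ =>
        ((hf i.succ).comp (measurable_pi_apply i) :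
          Measurable fun y : ∀ j : Fin n, E j.succ => f i.succ (y i))).aemeasurable)
    rw [ih (fun i => μ i.succ) (fun i => hf i.succ)] at h1
    exact h1

lemma aux_integral_bind_of_bdd {α β : Type*} [MeasurableSpace α] [MeasurableSpace β]
    [Nonempty β] (m : Measure α) [IsProbabilityMeasure m] (T : α → Measure β)
    (hT : Measurable T) (hTp : ∀ a, IsProbabilityMeasure (T a)) {g : β → ℝ}
    (hg : Measurable g) {C : ℝ} (hgb : ∀ x, |g x| ≤ C) :
    ∫ x, g x ∂(m.bind T) = ∫ a, ∫ x, g x ∂(T a) ∂m := by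
  have hC : 0 ≤ C := (abs_nonneg _).trans (hgb (Classical.arbitrary β))
  have hbind : IsProbabilityMeasure (m.bind T) := by
    constructor
    rw [Measure.bind_apply MeasurableSet.univ hT.aemeasurable]
    simp only [measure_univ, lintegral_one]
  set F : β → ℝ≥0∞ := fun x => ENNReal.ofReal (g x) with hFdef
  set G : β → ℝ≥0∞ := fun x => ENNReal.ofReal (-g x) with hGdef
  have hF : Measurable F := hg.ennreal_ofReal
  have hG : Measurable G := hg.neg.ennreal_ofReal
  have hFb : ∀ (κ : Measure β), IsProbabilityMeasure κ → ∫⁻ x, F x ∂κ ≤ ENNReal.ofReal C := by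
    intro κ hκ
    calc ∫⁻ x, F x ∂κ ≤ ∫⁻ _, ENNReal.ofReal C ∂κ :=
          lintegral_mono fun x => ENNReal.ofReal_le_ofReal ((le_abs_self _).trans (hgb x))
      _ = ENNReal.ofReal C := by simp
  have hGb : ∀ (κ : Measure β), IsProbabilityMeasure κ → ∫⁻ x, G x ∂κ ≤ ENNReal.ofReal C := by
    intro κ hκ
    calc ∫⁻ x, G x ∂κ ≤ ∫⁻ _, ENNReal.ofReal C ∂κ :=
          lintegral_mono fun x => ENNReal.ofReal_le_ofReal ((neg_le_abs _).trans (hgb x))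
      _ = ENNReal.ofReal C := by simp
  have hint : ∀ (κ : Measure β), IsProbabilityMeasure κ → Integrable g κ := by
    intro κ hκ
    exact Integrable.mono' (integrable_const C) hg.aestronglyMeasurable
      (Eventually.of_forall fun x => by rw [Real.norm_eq_abs]; exact hgb x)
  have hrepr : ∀ (κ : Measure β), IsProbabilityMeasure κ →
      ∫ x, g x ∂κ = (∫⁻ x, F x ∂κ).toReal - (∫⁻ x, G x ∂κ).toReal := by
    intro κ hκ
    exact integral_eq_lintegral_pos_part_sub_lintegral_neg_part (hint κ hκ)
  rw [hrepr (m.bind T) hbind]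
  rw [Measure.lintegral_bind hT.aemeasurable hF.aemeasurable, Measure.lintegral_bind hT.aemeasurable hG.aemeasurable]
  have hmF : Measurable fun a => ∫⁻ x, F x ∂(T a) := (Measure.measurable_lintegral hF).comp hT
  have hmG : Measurable fun a => ∫⁻ x, G x ∂(T a) := (Measure.measurable_lintegral hG).comp hT
  have hiF : Integrable (fun a => (∫⁻ x, F x ∂(T a)).toReal) m := by
    refine Integrable.mono' (integrable_const C) hmF.ennreal_toReal.aestronglyMeasurable
      (Eventually.of_forall fun a => ?_)
    rw [Real.norm_eq_abs, abs_of_nonneg ENNReal.toReal_nonneg]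
    exact ENNReal.toReal_le_of_le_ofReal hC (hFb (T a) (hTp a))
  have hiG : Integrable (fun a => (∫⁻ x, G x ∂(T a)).toReal) m := by
    refine Integrable.mono' (integrable_const C) hmG.ennreal_toReal.aestronglyMeasurable
      (Eventually.of_forall fun a => ?_)
    rw [Real.norm_eq_abs, abs_of_nonneg ENNReal.toReal_nonneg]
    exact ENNReal.toReal_le_of_le_ofReal hC (hGb (T a) (hTp a))
  have hrw : (fun a => ∫ x, g x ∂(T a))
      = fun a => (∫⁻ x, F x ∂(T a)).toReal - (∫⁻ x, G x ∂(T a)).toReal :=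
    funext fun a => hrepr (T a) (hTp a)
  rw [hrw, integral_sub hiF hiG]
  rw [integral_toReal hmF.aemeasurable (Eventually.of_forall fun a =>
      lt_of_le_of_lt (hFb (T a) (hTp a)) ENNReal.ofReal_lt_top),
    integral_toReal hmG.aemeasurable (Eventually.of_forall fun a =>
      lt_of_le_of_lt (hGb (T a) (hTp a)) ENNReal.ofReal_lt_top)]

section Main

variable {d : ℕ} {X : Fin d → Type*} [∀ i, TopologicalSpace (X i)] [∀ i, PolishSpace (X i)]
  [∀ i, MeasurableSpace (X i)] [∀ i, BorelSpace (X i)]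
  [∀ i, MeasurableSpace (ProbabilityMeasure (X i))]
  [∀ i, BorelSpace (ProbabilityMeasure (X i))]

lemma aux_measurable_piMeasure :
    Measurable fun s : ∀ i, ProbabilityMeasure (X i) =>
      Measure.pi (fun i => (s i : Measure (X i))) := by
  refine Measure.measurable_measure.mpr ?_
  intro A hA
  refine MeasurableSpace.induction_on_inter
      (C := fun A _ => Measurable fun s : ∀ i, ProbabilityMeasure (X i) =>
        Measure.pi (fun i => (s i : Measure (X i))) A)
      generateFrom_pi.symm isPiSystem_pi ?_ ?_ ?_ ?_ A hA
  · simp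
  · rintro _ ⟨t, ht, rfl⟩
    have key : ∀ s : ∀ i, ProbabilityMeasure (X i),
        Measure.pi (fun i => (s i : Measure (X i))) (Set.univ.pi t)
          = ∏ i, (s i : Measure (X i)) (t i) :=
      fun s => Measure.pi_pi _ t
    simp_rw [key]
    exact Finset.measurable_prod Finset.univ fun i _ =>
      (aux_measurable_eval (ht i (Set.mem_univ i))).comp (measurable_pi_apply i)
  · intro B hB h
    have key : ∀ s : ∀ i, ProbabilityMeasure (X i),
        Measure.pi (fun i => (s i : Measure (X i))) Bᶜ
          = 1 - Measure.pi (fun i => (s i : Measure (X i))) B := by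
      intro s
      rw [measure_compl hB (measure_ne_top _ _), measure_univ]
    simp_rw [key]
    exact (ENNReal.continuous_sub_left ENNReal.one_ne_top).measurable.comp h
  · intro g hdisj hmeas h
    have key : ∀ s : ∀ i, ProbabilityMeasure (X i),
        Measure.pi (fun i => (s i : Measure (X i))) (⋃ n, g n)
          = ∑' n, Measure.pi (fun i => (s i : Measure (X i))) (g n) :=
      fun s => measure_iUnion hdisj hmeas
    simp_rw [key]
    exact Measurable.ennreal_tsum h

end Main

theorem stmt_2
    {d : ℕ} (X : Fin d → Type*) [∀ i, TopologicalSpace (X i)] [∀ i, PolishSpace (X i)]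
    [∀ i, MeasurableSpace (X i)] [∀ i, BorelSpace (X i)]
    [∀ i, MeasurableSpace (ProbabilityMeasure (X i))]
    [∀ i, BorelSpace (ProbabilityMeasure (X i))]
    (μ : ∀ i, ProbabilityMeasure (X i)) (Δ : ∀ i, Set (ProbabilityMeasure (X i)))
    (hΔmeas : ∀ i, MeasurableSet (Δ i))
    (ν : ∀ i, Measure (ProbabilityMeasure (X i)))
    [hνprob : ∀ i, IsProbabilityMeasure (ν i)] (hνΔ : ∀ i, ν i (Δ i) = 1)
    (hbary : ∀ i, ∀ g : X i → ℝ, Continuous g → (∃ C : ℝ, ∀ x, |g x| ≤ C) →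
      ∫ x, g x ∂(μ i : Measure (X i)) = ∫ s, (∫ x, g x ∂(s : Measure (X i))) ∂(ν i)) :
    (Measure.pi ν) (Set.univ.pi Δ) = 1 ∧
    ∀ φ : (∀ i, X i) → ℝ, Continuous φ → (∃ C : ℝ, ∀ x, |φ x| ≤ C) →
      ∫ x, φ x ∂(Measure.pi fun i => (μ i : Measure (X i))) =
        ∫ s : ∀ i, ProbabilityMeasure (X i),
          (∫ x, φ x ∂(Measure.pi fun i => (s i : Measure (X i)))) ∂(Measure.pi ν) := by
  constructor
  · rw [Measure.pi_pi]
    simp [hνΔ]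
  · intro φ hφc hφb
    obtain ⟨C, hC⟩ := hφb
    have key : ∀ i, (μ i : Measure (X i)) = (ν i).bind (fun s => (s : Measure (X i))) :=
      fun i => aux_bary_bind (μ i) (ν i) (hbary i)
    have hT : Measurable fun s : ∀ i, ProbabilityMeasure (X i) =>
        Measure.pi (fun i => (s i : Measure (X i))) := aux_measurable_piMeasure
    have hpi : (Measure.pi fun i => (μ i : Measure (X i)))
        = (Measure.pi ν).bind
            (fun s : ∀ i, ProbabilityMeasure (X i) =>
              Measure.pi fun i => (s i : Measure (X i))) := by
      apply Measure.pi_eq (μ := fun i => (μ i : Measure (X i)))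
      intro t ht
      rw [Measure.bind_apply (MeasurableSet.univ_pi ht) hT.aemeasurable]
      have keyrw : ∀ s : ∀ i, ProbabilityMeasure (X i),
          Measure.pi (fun i => (s i : Measure (X i))) (Set.univ.pi t)
            = ∏ i, (s i : Measure (X i)) (t i) := fun s => Measure.pi_pi _ t
      simp_rw [keyrw]
      have hprod := aux_lintegral_pi_prod (E := fun i => ProbabilityMeasure (X i)) (μ := ν)
        (f := fun i p => (p : Measure (X i)) (t i))
        (fun i => aux_measurable_eval (ht i))
      rw [hprod]
      exact Finset.prod_congr rfl fun i _ => by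
        rw [key i, Measure.bind_apply (ht i) aux_measurable_toMeasure.aemeasurable]
    have hne : Nonempty (∀ i, X i) :=
      ⟨fun i => (aux_nonempty_of_prob (μ i : Measure (X i))).some⟩
    rw [hpi]
    exact aux_integral_bind_of_bdd (Measure.pi ν) _ hT (fun s => inferInstance)
      hφc.measurable hC
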